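/- Approximating-Hamiltonian identity for the strong-coupling BCS–Hubbard model: for every c ∈ ℂ, γ·|Λ|·|c|²·1 + H_Λ(c) − H_Λ = γ·(𝔠₀ − √|Λ|·c·1)*·(𝔠₀ − √|Λ|·c·1); in particular, the element γ·|Λ|·|c|²·1 + H_Λ(c) − H_Λ is a nonnegative (positive semidefinite) element of the C*-algebra 𝔄. -/

import Mathlib

noncomputable section

variable {A : Type*} [NormedRing A] [StarRing A] [CStarRing A] [CompleteSpace A]
  [NormedAlgebra ℂ A] [StarModule ℂ A] [PartialOrder A] [StarOrderedRing A]
variable {Λ : Type*} [Fintype Λ] [DecidableEq Λ]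

/-- The on-site Hamiltonian
`h_x := 2λ·n_{x,↑}·n_{x,↓} − μ·(n_{x,↑}+n_{x,↓}) − h·(n_{x,↑}−n_{x,↓})`,
where `n_{x,s} := a_{x,s}*·a_{x,s}`, `↑ = true`, `↓ = false`. -/
def onSiteHam (a : Λ → Bool → A) (mu h lam : ℝ) (x : Λ) : A :=
  (2 * lam : ℂ) • (star (a x true) * a x true * (star (a x false) * a x false))
    - (mu : ℂ) • (star (a x true) * a x true + star (a x false) * a x false)
    - (h : ℂ) • (star (a x true) * a x true - star (a x false) * a x false)

/-- The strong-coupling BCS–Hubbard Hamiltonian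
`H_Λ := Σ_{x∈Λ} h_x − (γ/|Λ|)·Σ_{x,y∈Λ} a_{x,↑}*·a_{x,↓}*·a_{y,↓}·a_{y,↑}`. -/
def bcsHubbardHam (a : Λ → Bool → A) (mu h lam gam : ℝ) : A :=
  ∑ x, onSiteHam a mu h lam x
    - ((gam / (Fintype.card Λ : ℝ) : ℝ) : ℂ) •
        ∑ x, ∑ y, star (a x true) * star (a x false) * (a y false * a y true)

/-- The approximating Hamiltonian
`H_Λ(c) := Σ_{x∈Λ} (h_x − γ·(c·a_{x,↑}*·a_{x,↓}* + c̄·a_{x,↓}·a_{x,↑}))`. -/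
def bcsHubbardApproxHam (a : Λ → Bool → A) (mu h lam gam : ℝ) (c : ℂ) : A :=
  ∑ x, (onSiteHam a mu h lam x
    - (gam : ℂ) • (c • (star (a x true) * star (a x false))
        + (starRingEnd ℂ c) • (a x false * a x true)))

/-- The zero-mode Cooper-pair annihilation operator
`𝔠₀ := |Λ|^{−1/2}·Σ_{x∈Λ} a_{x,↓}·a_{x,↑}`. -/
def cooperZeroMode (a : Λ → Bool → A) : A :=
  (((Real.sqrt (Fintype.card Λ : ℝ))⁻¹ : ℝ) : ℂ) • ∑ x, a x false * a x true

/-- approximating-Hamiltonian identity for the strong-coupling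
BCS–Hubbard model: for every `c ∈ ℂ`,
`γ·|Λ|·|c|²·1 + H_Λ(c) − H_Λ = γ·(𝔠₀ − √|Λ|·c·1)*·(𝔠₀ − √|Λ|·c·1)`;
in particular this element is nonnegative in the C*-algebra `A`. -/
theorem approximating_hamiltonian_identity [Nonempty Λ] (a : Λ → Bool → A)
    (hCAR1 : ∀ (x y : Λ) (s t : Bool), a x s * a y t + a y t * a x s = 0)
    (hCAR2 : ∀ (x y : Λ) (s t : Bool),
      a x s * star (a y t) + star (a y t) * a x s
        = if s = t ∧ x = y then 1 else 0)
    (mu h lam gam : ℝ) (hgam : 0 ≤ gam) (c : ℂ) :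
    ((gam * (Fintype.card Λ : ℝ) * ‖c‖ ^ 2 : ℝ) : ℂ) • (1 : A)
        + bcsHubbardApproxHam a mu h lam gam c - bcsHubbardHam a mu h lam gam
      = (gam : ℂ) •
          (star (cooperZeroMode a - ((Real.sqrt (Fintype.card Λ : ℝ) : ℂ) * c) • (1 : A))
            * (cooperZeroMode a - ((Real.sqrt (Fintype.card Λ : ℝ) : ℂ) * c) • (1 : A))) ∧
    0 ≤ ((gam * (Fintype.card Λ : ℝ) * ‖c‖ ^ 2 : ℝ) : ℂ) • (1 : A)
        + bcsHubbardApproxHam a mu h lam gam c - bcsHubbardHam a mu h lam gam := by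
  have hNpos : (0:ℝ) < (Fintype.card Λ : ℝ) := by exact_mod_cast Fintype.card_pos
  set N : ℝ := (Fintype.card Λ : ℝ) with hNdef
  have hs : Real.sqrt N * Real.sqrt N = N := Real.mul_self_sqrt hNpos.le
  have ht : ((Real.sqrt N : ℝ) : ℂ) * ((Real.sqrt N : ℝ) : ℂ) = ((N : ℝ) : ℂ) := by
    exact_mod_cast hs
  have ht0 : ((Real.sqrt N : ℝ) : ℂ) ≠ 0 := by
    have : (Real.sqrt N : ℝ) ≠ 0 := by positivity
    exact_mod_cast this
  have hN0 : ((N : ℝ) : ℂ) ≠ 0 := by exact_mod_cast hNpos.ne'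
  set b : A := ∑ x, a x false * a x true with hb
  have hstarb : star b = ∑ x, star (a x true) * star (a x false) := by
    simp [hb, star_sum, star_mul]
  have hdouble :
      (∑ x, ∑ y, star (a x true) * star (a x false) * (a y false * a y true) : A)
        = star b * b := by
    rw [hstarb, hb, Finset.sum_mul_sum]
  set w : A := cooperZeroMode a - ((Real.sqrt N : ℂ) * c) • (1 : A) with hw
  have hc0 : cooperZeroMode a = (((Real.sqrt N)⁻¹ : ℝ) : ℂ) • b := rfl
  have habs : (starRingEnd ℂ) c * c = ((‖c‖ : ℝ) : ℂ) ^ 2 := by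
    rw [mul_comm, Complex.mul_conj]
    norm_cast
    exact (Complex.sq_norm c).symm
  have hexp : star w * w
      = ((N⁻¹ : ℝ) : ℂ) • (star b * b) - c • star b - (starRingEnd ℂ) c • b
          + ((N * ‖c‖ ^ 2 : ℝ) : ℂ) • (1 : A) := by
    rw [hw, hc0]
    simp only [star_sub, star_smul, star_one, Complex.star_def, Complex.conj_ofReal, map_mul,
      sub_mul, mul_sub, smul_mul_smul_comm, smul_mul_assoc, mul_smul_comm,
      mul_one, one_mul, smul_smul]
    match_scalars
    all_goals field_simp
    all_goals try linear_combination -ht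
    all_goals try ring
    all_goals try linear_combination (c * (starRingEnd ℂ) c) * ht + ((N : ℝ) : ℂ) * habs
  have heq : ((gam * (Fintype.card Λ : ℝ) * ‖c‖ ^ 2 : ℝ) : ℂ) • (1 : A)
        + bcsHubbardApproxHam a mu h lam gam c - bcsHubbardHam a mu h lam gam
      = (gam : ℂ) • (star w * w) := by
    rw [hexp, bcsHubbardApproxHam, bcsHubbardHam, hdouble, Finset.sum_sub_distrib,
      ← Finset.smul_sum, Finset.sum_add_distrib, ← Finset.smul_sum, ← Finset.smul_sum,
      ← hstarb, ← hb]
    match_scalars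
    all_goals try simp only [hNdef]
    all_goals field_simp
    all_goals try ring
    all_goals (push_cast; ring)
  refine ⟨heq, ?_⟩
  rw [heq]
  have hpos : (gam : ℂ) • (star w * w)
      = star (((Real.sqrt gam : ℝ) : ℂ) • w) * (((Real.sqrt gam : ℝ) : ℂ) • w) := by
    rw [star_smul, smul_mul_smul_comm]
    congr 1
    rw [Complex.star_def, Complex.conj_ofReal]
    exact_mod_cast (Real.mul_self_sqrt hgam).symm
  rw [hpos]
  exact star_mul_self_nonneg _
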